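/- Lower bound on conformal coverage: under exchangeability and almost sure distinctness of nonconformity scores, the conformal prediction set at level ε has coverage probability exactly 1 − ⌊ε(n+1)⌋/(n+1), which lies in [1 − ε, 1 − ε + 1/(n+1)]. -/

import Mathlib

open MeasureTheory ProbabilityTheory Finset
open scoped ENNReal

private noncomputable def rk {N : ℕ} (j : Fin N) (x : Fin N → ℝ) : ℕ :=
  (Finset.univ.filter fun i => x j ≤ x i).card

private lemma rk_eq_sum {N : ℕ} (j : Fin N) (x : Fin N → ℝ) :
    rk j x = ∑ i, if x j ≤ x i then 1 else 0 := by
  unfold rk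
  rw [Finset.card_filter]

private lemma measurable_rk {N : ℕ} (j : Fin N) :
    Measurable fun x : Fin N → ℝ => rk j x := by
  simp only [rk_eq_sum]
  exact Finset.measurable_sum _ fun i _ =>
    Measurable.ite (measurableSet_le (measurable_pi_apply j) (measurable_pi_apply i))
      measurable_const measurable_const

private lemma rk_comp_perm {N : ℕ} (σ : Equiv.Perm (Fin N)) (j : Fin N) (x : Fin N → ℝ) :
    rk j (fun i => x (σ i)) = rk (σ j) x := by
  unfold rk
  exact Finset.card_equiv σ (fun i => by simp)

private lemma one_le_rk {N : ℕ} (j : Fin N) (x : Fin N → ℝ) : 1 ≤ rk j x := by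
  have : j ∈ Finset.univ.filter fun i => x j ≤ x i := by simp
  exact Finset.card_pos.2 ⟨j, this⟩

private lemma rk_le {N : ℕ} (j : Fin N) (x : Fin N → ℝ) : rk j x ≤ N := by
  simpa [rk] using Finset.card_filter_le Finset.univ fun i => x j ≤ x i

private lemma rk_lt_rk {N : ℕ} {j j' : Fin N} {x : Fin N → ℝ} (h : x j < x j') :
    rk j' x < rk j x := by
  apply Finset.card_lt_card
  rw [Finset.ssubset_iff_of_subset]
  · exact ⟨j, by simp, by simp [not_le.2 h]⟩
  · intro i hi
    simp only [Finset.mem_filter, Finset.mem_univ, true_and] at hi ⊢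
    exact le_trans h.le hi

private lemma rk_inj {N : ℕ} {x : Fin N → ℝ} (hx : Function.Injective x)
    {j j' : Fin N} (h : rk j x = rk j' x) : j = j' := by
  by_contra hne
  rcases lt_trichotomy (x j) (x j') with hlt | heq | hgt
  · exact absurd h (rk_lt_rk hlt).ne'
  · exact hne (hx heq)
  · exact absurd h (rk_lt_rk hgt).ne

private lemma rk_surj {N : ℕ} {x : Fin N → ℝ} (hx : Function.Injective x)
    {k : ℕ} (hk1 : 1 ≤ k) (hk2 : k ≤ N) : ∃ j, rk j x = k := by
  have himg : Finset.univ.image (fun j => rk j x) ⊆ Finset.Icc 1 N := by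
    intro a ha
    simp only [Finset.mem_image, Finset.mem_univ, true_and] at ha
    obtain ⟨j, rfl⟩ := ha
    exact Finset.mem_Icc.2 ⟨one_le_rk j x, rk_le j x⟩
  have hcard : (Finset.Icc 1 N).card ≤ (Finset.univ.image (fun j => rk j x)).card := by
    rw [Finset.card_image_of_injective _ (fun j j' h => rk_inj hx h)]
    simp [Nat.card_Icc]
  have : Finset.univ.image (fun j => rk j x) = Finset.Icc 1 N :=
    Finset.eq_of_subset_of_card_le himg hcard
  have hk : k ∈ Finset.univ.image (fun j => rk j x) := by
    rw [this]; exact Finset.mem_Icc.2 ⟨hk1, hk2⟩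
  simpa using hk

/-- Lower bound on conformal coverage: for exchangeable, a.s. pairwise distinct
nonconformity scores, the conformal prediction set at level `ε` (which errs exactly when
the p-value is `≤ ε`) has coverage probability exactly `1 − ⌊ε (n+1)⌋ / (n+1)`, a quantity
lying in `[1 − ε, 1 − ε + 1/(n+1)]`. -/
theorem stmt14 {Ω : Type*} [MeasurableSpace Ω] (P : Measure Ω) [IsProbabilityMeasure P]
    (n : ℕ) (α : Fin (n + 1) → Ω → ℝ) (hα : ∀ i, Measurable (α i))
    (hexch : ∀ σ : Equiv.Perm (Fin (n + 1)),
      Measure.map (fun ω => fun i => α (σ i) ω) P = Measure.map (fun ω => fun i => α i ω) P)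
    (hdistinct : ∀ i j : Fin (n + 1), i ≠ j → P {ω | α i ω = α j ω} = 0)
    (p : Ω → ℝ)
    (hp : ∀ ω, p ω =
      ((Finset.univ.filter fun i : Fin (n + 1) => α (Fin.last n) ω ≤ α i ω).card : ℝ)
        / (n + 1))
    (ε : ℝ) (hε : ε ∈ Set.Ioo (0 : ℝ) 1) :
    P {ω | ε < p ω} = ENNReal.ofReal (1 - ↑⌊ε * (n + 1)⌋ / (n + 1))
    ∧ 1 - ε ≤ 1 - (⌊ε * (n + 1)⌋ : ℝ) / (n + 1)
    ∧ 1 - (⌊ε * (n + 1)⌋ : ℝ) / (n + 1) ≤ 1 - ε + 1 / (n + 1) := by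
  obtain ⟨hε0, hε1⟩ := hε
  have hn1 : (0:ℝ) < (n:ℝ) + 1 := by positivity
  set f : Ω → Fin (n+1) → ℝ := fun ω i => α i ω with hf
  have hfm : Measurable f := measurable_pi_lambda _ hα
  set A : Fin (n+1) → ℕ → Set Ω := fun j k => {ω | rk j (f ω) = k} with hA
  have hAm : ∀ j k, MeasurableSet (A j k) := by
    intro j k
    exact ((measurable_rk j).comp hfm) (measurableSet_singleton k)
  -- the null set where scores coincide
  set D : Set Ω := ⋃ (i : Fin (n+1)) (j : Fin (n+1)) (_ : i ≠ j), {ω | α i ω = α j ω} with hDdef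
  have hDm : MeasurableSet D := by
    refine MeasurableSet.iUnion fun i => MeasurableSet.iUnion fun j =>
      MeasurableSet.iUnion fun _ => ?_
    exact measurableSet_eq_fun (hα i) (hα j)
  have hD0 : P D = 0 :=
    measure_iUnion_null fun i => measure_iUnion_null fun j =>
      measure_iUnion_null fun h => hdistinct i j h
  have hinj : ∀ ω, ω ∉ D → Function.Injective (f ω) := by
    intro ω hω i j hij
    by_contra hne
    exact hω (Set.mem_iUnion.2 ⟨i, Set.mem_iUnion.2 ⟨j, Set.mem_iUnion.2 ⟨hne, hij⟩⟩⟩)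
  -- permutation invariance of rank events
  have hperm : ∀ (σ : Equiv.Perm (Fin (n+1))) (j : Fin (n+1)) (k : ℕ),
      P (A (σ j) k) = P (A j k) := by
    intro σ j k
    have h1 : Measurable (fun ω => fun i => α (σ i) ω) :=
      measurable_pi_lambda _ fun i => hα (σ i)
    have hS : MeasurableSet {x : Fin (n+1) → ℝ | rk j x = k} :=
      measurable_rk j (measurableSet_singleton k)
    have h2 := congrArg (fun μ : Measure (Fin (n+1) → ℝ) => μ {x | rk j x = k}) (hexch σ)
    rw [Measure.map_apply h1 hS, Measure.map_apply hfm hS] at h2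
    have e1 : (fun ω => fun i => α (σ i) ω) ⁻¹' {x | rk j x = k} = A (σ j) k := by
      ext ω
      simp only [Set.mem_preimage, Set.mem_setOf_eq, hA]
      rw [show (fun i => α (σ i) ω) = (fun i => f ω (σ i)) from rfl, rk_comp_perm]
    have e2 : f ⁻¹' {x | rk j x = k} = A j k := rfl
    rw [e1, e2] at h2
    exact h2
  have hc0 : ((n:ℝ≥0∞) + 1) ≠ 0 := by simp
  have hctop : ((n:ℝ≥0∞) + 1) ≠ ⊤ := by
    simp [ENNReal.add_ne_top]
  -- uniformity of the rank of the last coordinate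
  have hkey : ∀ k : ℕ, 1 ≤ k → k ≤ n + 1 →
      P (A (Fin.last n) k) = ((n:ℝ≥0∞) + 1)⁻¹ := by
    intro k hk1 hk2
    have heq : ∀ j, P (A j k) = P (A (Fin.last n) k) := by
      intro j
      have := hperm (Equiv.swap j (Fin.last n)) j k
      rw [Equiv.swap_apply_left] at this
      exact this.symm
    set B : Fin (n+1) → Set Ω := fun j => A j k ∩ Dᶜ with hB
    have hBm : ∀ j ∈ (Finset.univ : Finset (Fin (n+1))), MeasurableSet (B j) :=
      fun j _ => (hAm j k).inter hDm.compl
    have hBdisj : ((Finset.univ : Finset (Fin (n+1))) : Set (Fin (n+1))).PairwiseDisjoint B := by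
      intro j _ j' _ hne
      refine Set.disjoint_left.2 fun ω hω hω' => hne ?_
      exact rk_inj (hinj ω hω.2) (hω.1.trans hω'.1.symm)
    have hBunion : ⋃ j ∈ (Finset.univ : Finset (Fin (n+1))), B j = Dᶜ := by
      ext ω
      simp only [Set.mem_iUnion, Finset.mem_univ, exists_prop, true_and, hB,
        Set.mem_inter_iff, Set.mem_compl_iff, hA, Set.mem_setOf_eq]
      constructor
      · rintro ⟨j, _, hω⟩; exact hω
      · intro hω
        obtain ⟨j, hj⟩ := rk_surj (hinj ω hω) hk1 hk2
        exact ⟨j, hj, hω⟩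
    have hsum : ∑ j : Fin (n+1), P (B j) = 1 := by
      rw [← measure_biUnion_finset hBdisj hBm, hBunion,
        measure_compl hDm (measure_ne_top P D), hD0, measure_univ, tsub_zero]
    have hPB : ∀ j, P (B j) = P (A j k) := by
      intro j
      apply measure_inter_conull
      rwa [compl_compl]
    have hsum2 : ((n:ℝ≥0∞) + 1) * P (A (Fin.last n) k) = 1 := by
      calc ((n:ℝ≥0∞) + 1) * P (A (Fin.last n) k)
          = ∑ _j : Fin (n+1), P (A (Fin.last n) k) := by
            rw [Finset.sum_const, nsmul_eq_mul]
            congr 1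
            simp
        _ = ∑ j : Fin (n+1), P (B j) := by
            refine Finset.sum_congr rfl fun j _ => ?_
            rw [hPB j, heq j]
        _ = 1 := hsum
    calc P (A (Fin.last n) k)
        = ((n:ℝ≥0∞) + 1)⁻¹ * (((n:ℝ≥0∞) + 1) * P (A (Fin.last n) k)) := by
          rw [← mul_assoc, ENNReal.inv_mul_cancel hc0 hctop, one_mul]
      _ = ((n:ℝ≥0∞) + 1)⁻¹ := by rw [hsum2, mul_one]
  -- the floor value
  have hxpos : (0:ℝ) ≤ ε * ((n:ℝ) + 1) := by positivity
  have hfl0 : 0 ≤ ⌊ε * ((n:ℝ) + 1)⌋ := Int.floor_nonneg.2 hxpos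
  have hfln : ⌊ε * ((n:ℝ) + 1)⌋ ≤ (n:ℤ) := by
    have hlt : ε * ((n:ℝ) + 1) < (n:ℝ) + 1 := by nlinarith
    have := Int.floor_lt.2 (by push_cast; linarith : ε * ((n:ℝ) + 1) < ((n:ℤ) + 1 : ℤ))
    omega
  set m : ℕ := (⌊ε * ((n:ℝ) + 1)⌋).toNat with hmdef
  have hm : (m:ℤ) = ⌊ε * ((n:ℝ) + 1)⌋ := Int.toNat_of_nonneg hfl0
  have hmn : m ≤ n := by omega
  have hmR : ((⌊ε * ((n:ℝ) + 1)⌋ : ℤ) : ℝ) = (m : ℝ) := by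
    rw [← hm]; push_cast; ring
  -- event decomposition
  have hrkcard : ∀ ω, rk (Fin.last n) (f ω)
      = (Finset.univ.filter fun i : Fin (n + 1) => α (Fin.last n) ω ≤ α i ω).card := by
    intro ω; rfl
  have hev : {ω | p ω ≤ ε} = ⋃ k ∈ Finset.Icc 1 m, A (Fin.last n) k := by
    ext ω
    simp only [Set.mem_setOf_eq, Set.mem_iUnion, Finset.mem_Icc, exists_prop, hA]
    rw [hp ω, ← hrkcard ω]
    constructor
    · intro h
      refine ⟨rk (Fin.last n) (f ω), ⟨one_le_rk _ _, ?_⟩, rfl⟩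
      rw [div_le_iff₀ hn1] at h
      have h2 : ((rk (Fin.last n) (f ω) : ℤ) : ℝ) ≤ ε * ((n:ℝ) + 1) := by push_cast; exact h
      have h3 : (rk (Fin.last n) (f ω) : ℤ) ≤ ⌊ε * ((n:ℝ) + 1)⌋ := Int.le_floor.2 h2
      omega
    · rintro ⟨k, ⟨hk1, hk2⟩, hk⟩
      rw [div_le_iff₀ hn1, hk]
      have h4 : ((m:ℤ) : ℝ) ≤ ε * ((n:ℝ) + 1) := by rw [hm]; exact Int.floor_le _
      have h5 : (k:ℝ) ≤ (m:ℝ) := by exact_mod_cast hk2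
      push_cast at h4 ⊢
      linarith
  have hdisj : ((Finset.Icc 1 m : Finset ℕ) : Set ℕ).PairwiseDisjoint
      fun k => A (Fin.last n) k := by
    intro k _ k' _ hne
    refine Set.disjoint_left.2 fun ω hω hω' => hne ?_
    exact hω.symm.trans hω'
  have hevm : MeasurableSet {ω | p ω ≤ ε} := by
    rw [hev]
    exact (Finset.Icc 1 m).measurableSet_biUnion fun k _ => hAm _ k
  have hple : P {ω | p ω ≤ ε} = (m : ℝ≥0∞) * ((n:ℝ≥0∞) + 1)⁻¹ := by
    rw [hev, measure_biUnion_finset hdisj fun k _ => hAm _ k]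
    rw [Finset.sum_congr rfl fun k hk =>
      hkey k (Finset.mem_Icc.1 hk).1 (((Finset.mem_Icc.1 hk).2).trans (by omega))]
    rw [Finset.sum_const, nsmul_eq_mul, Nat.card_Icc]
    norm_num
  have hcompl : {ω | ε < p ω} = {ω | p ω ≤ ε}ᶜ := by
    ext ω; simp [not_le]
  have hmain : P {ω | ε < p ω} = 1 - (m : ℝ≥0∞) * ((n:ℝ≥0∞) + 1)⁻¹ := by
    rw [hcompl, measure_compl hevm (measure_ne_top P _), measure_univ, hple]
  refine ⟨?_, ?_, ?_⟩
  · rw [hmain, hmR]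
    have hq0 : (0:ℝ) ≤ (m:ℝ) / ((n:ℝ) + 1) := by positivity
    rw [ENNReal.ofReal_sub 1 hq0, ENNReal.ofReal_one]
    congr 1
    rw [ENNReal.ofReal_div_of_pos hn1, ENNReal.ofReal_natCast]
    rw [div_eq_mul_inv]
    congr 1
    rw [show ((n:ℝ) + 1) = ((n + 1 : ℕ) : ℝ) by push_cast; ring, ENNReal.ofReal_natCast]
    push_cast
    ring
  · have h6 : ((⌊ε * ((n:ℝ) + 1)⌋ : ℤ) : ℝ) / ((n:ℝ) + 1) ≤ ε := by
      rw [div_le_iff₀ hn1]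
      exact Int.floor_le _
    linarith
  · have h7 : ε * ((n:ℝ) + 1) - 1 < ((⌊ε * ((n:ℝ) + 1)⌋ : ℤ) : ℝ) :=
      Int.sub_one_lt_floor _
    have h8 : (ε * ((n:ℝ) + 1) - 1) / ((n:ℝ) + 1)
        ≤ ((⌊ε * ((n:ℝ) + 1)⌋ : ℤ) : ℝ) / ((n:ℝ) + 1) := by gcongr
    have h9 : (ε * ((n:ℝ) + 1) - 1) / ((n:ℝ) + 1) = ε - 1 / ((n:ℝ) + 1) := by
      field_simp
    linarith
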